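/- If λ ∈ ℝ^L satisfies the dual equation Σ_{i=1}^n exp(⟨λ, x_i⟩)(x_i − g̃) = 0, then for every feasible weight vector q the cross-entropy identity Σ_{i=1}^n q_i log p_i(λ) = Σ_{i=1}^n p_i(λ) log p_i(λ) holds. -/

import Mathlib

open Finset

/-- Calibration weights associated with a dual vector `lam`:
`p_i(λ) = exp(⟨λ, x_i⟩) / Σ_j exp(⟨λ, x_j⟩)`. -/
noncomputable def calibWeights {n L : ℕ} (x : Fin n → Fin L → ℝ) (lam : Fin L → ℝ)
    (i : Fin n) : ℝ :=
  Real.exp (∑ j, lam j * x i j) / ∑ k, Real.exp (∑ j, lam j * x k j)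

theorem calibWeights_cross_entropy (n L : ℕ) (hn : 1 ≤ n) (hL : 1 ≤ L)
    (x : Fin n → Fin L → ℝ) (gtilde : Fin L → ℝ) (lam : Fin L → ℝ)
    (hdual : ∑ i, Real.exp (∑ j, lam j * x i j) • (x i - gtilde) = 0)
    (q : Fin n → ℝ)
    (hq_nonneg : ∀ i, 0 ≤ q i)
    (hq_sum : ∑ i, q i = 1)
    (hq_moment : ∑ i, q i • x i = gtilde) :
    ∑ i, q i * Real.log (calibWeights x lam i)
      = ∑ i, calibWeights x lam i * Real.log (calibWeights x lam i) := by
  have hne : (Finset.univ : Finset (Fin n)).Nonempty := by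
    simpa [Finset.univ_nonempty_iff] using Fin.pos_iff_nonempty.mp hn
  set S : ℝ := ∑ k, Real.exp (∑ j, lam j * x k j) with hSdef
  have hS : 0 < S := Finset.sum_pos (fun k _ => Real.exp_pos _) hne
  set p : Fin n → ℝ := calibWeights x lam with hp
  have hlog : ∀ i, Real.log (p i) = (∑ j, lam j * x i j) - Real.log S := by
    intro i
    rw [hp, calibWeights, Real.log_div (Real.exp_ne_zero _) hS.ne', Real.log_exp]
  have hpsum : ∑ i, p i = 1 := by
    simp only [hp, calibWeights, ← Finset.sum_div]
    exact div_self hS.ne'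
  -- coordinate-wise moment identity for p
  have hpmom : ∀ j, ∑ i, p i * x i j = gtilde j := by
    intro j
    have h := congrFun hdual j
    simp only [Finset.sum_apply, Pi.smul_apply, Pi.sub_apply, Pi.zero_apply,
      smul_eq_mul, mul_sub, Finset.sum_sub_distrib, sub_eq_zero,
      ← Finset.sum_mul] at h
    have : ∑ i, p i * x i j = (∑ i, Real.exp (∑ j, lam j * x i j) * x i j) / S := by
      simp only [hp, calibWeights, ← Finset.sum_div, div_mul_eq_mul_div]
      rfl
    rw [this, h, mul_comm, mul_div_assoc, div_self hS.ne', mul_one]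
  have hqmom : ∀ j, ∑ i, q i * x i j = gtilde j := by
    intro j
    have h := congrFun hq_moment j
    simpa using h
  have key : ∀ w : Fin n → ℝ, (∑ i, w i = 1) → (∀ j, ∑ i, w i * x i j = gtilde j) →
      ∑ i, w i * Real.log (p i) = (∑ j, lam j * gtilde j) - Real.log S := by
    intro w hw1 hwm
    calc ∑ i, w i * Real.log (p i)
        = ∑ i, (w i * ∑ j, lam j * x i j - w i * Real.log S) := by
          simp [hlog, mul_sub]
      _ = (∑ i, ∑ j, w i * (lam j * x i j)) - (∑ i, w i) * Real.log S := by
          rw [Finset.sum_sub_distrib, ← Finset.sum_mul]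
          simp [Finset.mul_sum]
      _ = (∑ j, lam j * gtilde j) - Real.log S := by
          rw [Finset.sum_comm, hw1, one_mul]
          congr 1
          refine Finset.sum_congr rfl fun j _ => ?_
          rw [← hwm j, Finset.mul_sum]
          refine Finset.sum_congr rfl fun i _ => by ring
  rw [key q hq_sum hqmom, key p hpsum hpmom]
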